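/- (Failure of a commutator estimate for $|D|$.) The inequality $\|u|D|\bar{u} - \bar{u}|D|u\|_{L^2} \leq C \|u\|_{H^{1/2}}\|u\|_{H^1}$ fails: for $u_N(x) = \frac{1}{\sqrt{\log N}} \sum_{n=1}^N \frac{e^{inx}}{n}$, the ratio $\|u_N |D|\overline{u_N} - \overline{u_N}|D|u_N\|_{L^2} / (\|u_N\|_{H^{1/2}}\|u_N\|_{H^1})$ is unbounded as $N \to \infty$. -/

import Mathlib

open Real Complex

noncomputable section

/-- Fourier coefficients of `u_N = (log N)^{-1/2} ∑_{n=1}^N e^{inx}/n`. -/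
def uCoeff (N : ℕ) (n : ℤ) : ℂ :=
  if 1 ≤ n ∧ n ≤ (N : ℤ) then 1 / ((Real.sqrt (Real.log N) : ℂ) * (n : ℂ)) else 0

lemma uCoeff_zero {N : ℕ} {n : ℤ} (h : n ∉ Finset.Icc (1:ℤ) (N:ℤ)) : uCoeff N n = 0 := by
  rw [Finset.mem_Icc] at h
  simp only [uCoeff, if_neg h]

lemma uCoeff_val {N : ℕ} {n : ℤ} (h1 : 1 ≤ n) (h2 : n ≤ (N:ℤ)) :
    uCoeff N n = ((1/(Real.sqrt (Real.log N) * (n:ℝ)) : ℝ) : ℂ) := by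
  rw [uCoeff, if_pos ⟨h1, h2⟩]
  push_cast
  ring

lemma uCoeff_ofReal (N : ℕ) (n : ℤ) : ∃ r : ℝ, 0 ≤ r ∧ uCoeff N n = (r:ℂ) := by
  by_cases h : 1 ≤ n ∧ n ≤ (N:ℤ)
  · refine ⟨1/(Real.sqrt (Real.log N) * (n:ℝ)), ?_, uCoeff_val h.1 h.2⟩
    apply one_div_nonneg.mpr
    have : (0:ℝ) ≤ (n:ℝ) := by exact_mod_cast le_trans zero_le_one h.1
    positivity
  · exact ⟨0, le_refl _, by simp [uCoeff, if_neg h]⟩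

lemma norm_sq_uCoeff {N : ℕ} {n : ℤ} (hL : 0 < Real.log N) (h1 : 1 ≤ n) (h2 : n ≤ (N:ℤ)) :
    ‖uCoeff N n‖^2 = 1 / (Real.log N * (n:ℝ)^2) := by
  rw [uCoeff_val h1 h2, Complex.norm_real, Real.norm_eq_abs]
  have hn : (0:ℝ) < (n:ℝ) := by exact_mod_cast lt_of_lt_of_le zero_lt_one h1
  have hs : 0 < Real.sqrt (Real.log N) := Real.sqrt_pos.mpr hL
  rw [_root_.abs_of_nonneg (show (0:ℝ) ≤ 1/(Real.sqrt (Real.log N)*(n:ℝ)) by positivity)]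
  rw [div_pow, one_pow, mul_pow, Real.sq_sqrt hL.le]

lemma sum_Icc_int {M : Type*} [AddCommMonoid M] (N : ℕ) (f : ℤ → M) :
    ∑ k ∈ Finset.Icc (1:ℤ) (N:ℤ), f k = ∑ j ∈ Finset.range N, f ((j:ℤ)+1) := by
  refine Finset.sum_nbij' (fun k => (k-1).toNat) (fun j => (j:ℤ)+1) ?_ ?_ ?_ ?_ ?_ <;>
    intro a ha <;>
    simp only [Finset.mem_Icc, Finset.mem_range] at * 
  · omega
  · omega
  · omega
  · omega
  · congr 1
    omega

lemma harm_ub : ∀ N : ℕ, ∑ j ∈ Finset.range N, 1/((j:ℝ)+1) ≤ 1 + Real.log N := by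
  intro N
  induction N with
  | zero => simp
  | succ n ih =>
    rw [Finset.sum_range_succ]
    rcases Nat.eq_zero_or_pos n with h | h
    · subst h; simp
    · have hn : (0:ℝ) < n := by exact_mod_cast h
      have key : 1/((n:ℝ)+1) ≤ Real.log (n+1) - Real.log n := by
        have h1 : Real.log ((n:ℝ)/((n:ℝ)+1)) ≤ (n:ℝ)/((n:ℝ)+1) - 1 :=
          Real.log_le_sub_one_of_pos (by positivity)
        rw [Real.log_div (by positivity) (by positivity)] at h1
        have : (n:ℝ)/((n:ℝ)+1) - 1 = -(1/((n:ℝ)+1)) := by field_simp; ring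
        rw [this] at h1
        linarith
    -- combine
      have : ((n:ℝ)+1) = ((n+1:ℕ):ℝ) := by push_cast; ring
      rw [← this]
      linarith
  
lemma harm_lb : ∀ K : ℕ, Real.log ((K:ℝ)+1) ≤ ∑ j ∈ Finset.range K, 1/((j:ℝ)+1) := by
  intro K
  induction K with
  | zero => simp
  | succ n ih =>
    rw [Finset.sum_range_succ]
    have hn : (0:ℝ) < (n:ℝ)+1 := by positivity
    have key : Real.log ((n:ℝ)+1+1) - Real.log ((n:ℝ)+1) ≤ 1/((n:ℝ)+1) := by
      have h1 : Real.log (((n:ℝ)+1+1)/((n:ℝ)+1)) ≤ ((n:ℝ)+1+1)/((n:ℝ)+1) - 1 :=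
        Real.log_le_sub_one_of_pos (by positivity)
      rw [Real.log_div (by positivity) (by positivity)] at h1
      have : ((n:ℝ)+1+1)/((n:ℝ)+1) - 1 = 1/((n:ℝ)+1) := by field_simp; ring
      rw [this] at h1
      linarith
    have : ((n+1:ℕ):ℝ)+1 = (n:ℝ)+1+1 := by push_cast; ring
    rw [this]
    linarith

/-- The Sobolev norm `‖u_N‖_{H^s}`. -/
def sobNormSeq (s : ℝ) (N : ℕ) : ℝ :=
  Real.sqrt (∑' k : ℤ, (1 + |(k : ℝ)| ^ 2) ^ s * ‖uCoeff N k‖ ^ 2)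

lemma sob_tsum (s : ℝ) (N : ℕ) :
    ∑' k : ℤ, (1 + |(k : ℝ)| ^ 2) ^ s * ‖uCoeff N k‖ ^ 2
      = ∑ k ∈ Finset.Icc (1:ℤ) (N:ℤ), (1 + |(k : ℝ)| ^ 2) ^ s * ‖uCoeff N k‖ ^ 2 := by
  apply tsum_eq_sum
  intro k hk
  rw [uCoeff_zero hk]
  simp

lemma log_ge_one {N : ℕ} (hN : 4 ≤ N) : 1 ≤ Real.log N := by
  have h0 : (0:ℝ) < N := by positivity
  rw [Real.le_log_iff_exp_le h0]
  have := Real.exp_one_lt_d9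
  have h4 : (4:ℝ) ≤ N := by exact_mod_cast hN
  linarith

lemma sob_half_le {N : ℕ} (hN : 4 ≤ N) : sobNormSeq (1/2) N ≤ 2 := by
  have hL : (1:ℝ) ≤ Real.log N := log_ge_one hN
  have hL0 : (0:ℝ) < Real.log N := lt_of_lt_of_le one_pos hL
  rw [sobNormSeq, sob_tsum]
  have main : ∑ k ∈ Finset.Icc (1:ℤ) (N:ℤ), (1 + |(k : ℝ)| ^ 2) ^ ((1:ℝ)/2) * ‖uCoeff N k‖ ^ 2 ≤ 4 := ?_
  · calc Real.sqrt (∑ k ∈ Finset.Icc (1:ℤ) (N:ℤ), (1 + |(k : ℝ)| ^ 2) ^ ((1:ℝ)/2) * ‖uCoeff N k‖ ^ 2)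
        ≤ Real.sqrt 4 := Real.sqrt_le_sqrt main
      _ = 2 := by rw [show (4:ℝ) = 2^2 by norm_num, Real.sqrt_sq (by norm_num)]
  have step : ∀ k ∈ Finset.Icc (1:ℤ) (N:ℤ),
      (1 + |(k : ℝ)| ^ 2) ^ ((1:ℝ)/2) * ‖uCoeff N k‖ ^ 2 ≤ (2/Real.log N) * (1/((k:ℝ))) := by
    intro k hk
    rw [Finset.mem_Icc] at hk
    have hk0 : (0:ℝ) < (k:ℝ) := by exact_mod_cast lt_of_lt_of_le zero_lt_one hk.1
    have hk1 : (1:ℝ) ≤ (k:ℝ) := by exact_mod_cast hk.1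
    rw [norm_sq_uCoeff hL0 hk.1 hk.2]
    rw [_root_.abs_of_nonneg hk0.le]
    have h1 : (1 + (k:ℝ) ^ 2) ^ ((1:ℝ)/2) ≤ 2*(k:ℝ) := by
      rw [← Real.sqrt_eq_rpow]
      rw [show 2*(k:ℝ) = Real.sqrt ((2*(k:ℝ))^2) by rw [Real.sqrt_sq (by positivity)]]
      apply Real.sqrt_le_sqrt
      nlinarith
    calc (1 + (k:ℝ) ^ 2) ^ ((1:ℝ)/2) * (1 / (Real.log N * (k:ℝ)^2))
        ≤ (2*(k:ℝ)) * (1 / (Real.log N * (k:ℝ)^2)) := by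
          apply mul_le_mul_of_nonneg_right h1 (by positivity)
      _ = (2/Real.log N) * (1/((k:ℝ))) := by field_simp
  calc ∑ k ∈ Finset.Icc (1:ℤ) (N:ℤ), (1 + |(k : ℝ)| ^ 2) ^ ((1:ℝ)/2) * ‖uCoeff N k‖ ^ 2
      ≤ ∑ k ∈ Finset.Icc (1:ℤ) (N:ℤ), (2/Real.log N) * (1/((k:ℝ))) := Finset.sum_le_sum step
    _ = (2/Real.log N) * ∑ k ∈ Finset.Icc (1:ℤ) (N:ℤ), (1/((k:ℝ))) := by
        rw [Finset.mul_sum]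
    _ ≤ (2/Real.log N) * (1 + Real.log N) := by
        apply mul_le_mul_of_nonneg_left _ (by positivity)
        rw [sum_Icc_int N (fun k => 1/((k:ℝ)))]
        have := harm_ub N
        convert this using 2 with j
        · rfl
        push_cast
        ring
    _ ≤ 4 := by
        rw [div_mul_eq_mul_div, div_le_iff₀ hL0]
        nlinarith

lemma sob_one_le {N : ℕ} (hN : 4 ≤ N) : sobNormSeq 1 N ≤ Real.sqrt (2*N/Real.log N) := by
  have hL : (1:ℝ) ≤ Real.log N := log_ge_one hN
  have hL0 : (0:ℝ) < Real.log N := lt_of_lt_of_le one_pos hL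
  rw [sobNormSeq, sob_tsum]
  apply Real.sqrt_le_sqrt
  have step : ∀ k ∈ Finset.Icc (1:ℤ) (N:ℤ),
      (1 + |(k : ℝ)| ^ 2) ^ (1:ℝ) * ‖uCoeff N k‖ ^ 2 ≤ 2/Real.log N := by
    intro k hk
    rw [Finset.mem_Icc] at hk
    have hk0 : (0:ℝ) < (k:ℝ) := by exact_mod_cast lt_of_lt_of_le zero_lt_one hk.1
    have hk1 : (1:ℝ) ≤ (k:ℝ) := by exact_mod_cast hk.1
    rw [norm_sq_uCoeff hL0 hk.1 hk.2, _root_.abs_of_nonneg hk0.le, Real.rpow_one]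
    rw [mul_one_div, div_le_div_iff₀ (by positivity) hL0]
    have hk2 : (1:ℝ) ≤ (k:ℝ)^2 := by nlinarith
    nlinarith [mul_le_mul_of_nonneg_left hk2 hL0.le]
  calc ∑ k ∈ Finset.Icc (1:ℤ) (N:ℤ), (1 + |(k : ℝ)| ^ 2) ^ (1:ℝ) * ‖uCoeff N k‖ ^ 2
      ≤ ∑ _k ∈ Finset.Icc (1:ℤ) (N:ℤ), 2/Real.log N := Finset.sum_le_sum step
    _ = (N:ℝ) * (2/Real.log N) := by
        rw [Finset.sum_const, Int.card_Icc]
        simp [nsmul_eq_mul]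
    _ = 2*N/Real.log N := by ring

/-- The `L²` norm of the commutator `u|D|ū - ū|D|u`, whose `k`-th Fourier
coefficient is `∑_l (|k-l| - |l|) û(l) conj û(l-k)`. -/
def commNorm (N : ℕ) : ℝ :=
  Real.sqrt (∑' k : ℤ,
    ‖∑' l : ℤ, (((|k - l| - |l| : ℤ) : ℝ) : ℂ) * uCoeff N l *
        starRingEnd ℂ (uCoeff N (l - k))‖ ^ 2)

lemma cterm_inner (N : ℕ) (k : ℤ) :
    (∑' l : ℤ, (((|k - l| - |l| : ℤ) : ℝ) : ℂ) * uCoeff N l *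
        starRingEnd ℂ (uCoeff N (l - k)))
    = ∑ l ∈ Finset.Icc (1:ℤ) (N:ℤ), (((|k - l| - |l| : ℤ) : ℝ) : ℂ) * uCoeff N l *
        starRingEnd ℂ (uCoeff N (l - k)) := by
  apply tsum_eq_sum
  intro l hl
  rw [uCoeff_zero hl]
  ring

lemma ccoeff_zero (N : ℕ) (k : ℤ) (hk : k ∉ Finset.Icc (1-(N:ℤ)) ((N:ℤ)-1)) :
    (∑' l : ℤ, (((|k - l| - |l| : ℤ) : ℝ) : ℂ) * uCoeff N l *
        starRingEnd ℂ (uCoeff N (l - k))) = 0 := by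
  rw [Finset.mem_Icc] at hk
  rw [cterm_inner]
  apply Finset.sum_eq_zero
  intro l hl
  rw [Finset.mem_Icc] at hl
  have : uCoeff N (l - k) = 0 := by
    apply uCoeff_zero
    rw [Finset.mem_Icc]
    omega
  rw [this]
  simp

lemma comm_ge (K : ℕ) (hK : 1 ≤ K) : Real.sqrt (K:ℝ) / 4 ≤ commNorm (4*K) := by
  set N : ℕ := 4*K with hNdef
  have hN4 : 4 ≤ N := by omega
  have hL : (1:ℝ) ≤ Real.log N := log_ge_one hN4
  have hL0 : (0:ℝ) < Real.log N := lt_of_lt_of_le one_pos hL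
  have hs0 : (0:ℝ) < Real.sqrt (Real.log N) := Real.sqrt_pos.mpr hL0
  set c : ℤ → ℂ := fun k => ∑' l : ℤ, (((|k - l| - |l| : ℤ) : ℝ) : ℂ) * uCoeff N l *
        starRingEnd ℂ (uCoeff N (l - k)) with hcdef
  -- pointwise lower bound on the interesting modes
  have key : ∀ k ∈ Finset.Icc (-(3*K:ℤ)) (-(2*K:ℤ)-1), (1/4 : ℝ) ≤ ‖c k‖ := by
    intro k hk
    rw [Finset.mem_Icc] at hk
    set m : ℤ := -k with hmdef
    have hm1 : 2*(K:ℤ)+1 ≤ m := by omega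
    have hm2 : m ≤ 3*(K:ℤ) := by omega
    have hrec : c k = ∑ l ∈ Finset.Icc (1:ℤ) (N:ℤ), (((|k - l| - |l| : ℤ) : ℝ) : ℂ) * uCoeff N l *
        starRingEnd ℂ (uCoeff N (l - k)) := cterm_inner N k
    -- real part computation
    have habs : ∀ l : ℤ, 1 ≤ l → (|k - l| - |l| : ℤ) = m := by
      intro l hl
      have h1 : |k - l| = m + l := by
        rw [abs_of_nonpos (by omega)]; omega
      have h2 : |l| = l := abs_of_nonneg (by omega)
      omega
    have hg0 : ∀ l ∈ Finset.Icc (1:ℤ) (N:ℤ),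
        0 ≤ ((((|k - l| - |l| : ℤ) : ℝ) : ℂ) * uCoeff N l * starRingEnd ℂ (uCoeff N (l - k))).re := by
      intro l hl
      rw [Finset.mem_Icc] at hl
      obtain ⟨r1, hr1, he1⟩ := uCoeff_ofReal N l
      obtain ⟨r2, hr2, he2⟩ := uCoeff_ofReal N (l - k)
      rw [he1, he2, Complex.conj_ofReal, habs l hl.1]
      rw [← Complex.ofReal_mul, ← Complex.ofReal_mul, Complex.ofReal_re]
      have hm0 : (0:ℝ) ≤ (m:ℝ) := by exact_mod_cast (by omega : (0:ℤ) ≤ m)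
      exact mul_nonneg (mul_nonneg hm0 hr1) hr2
    have hg1 : ∀ l ∈ Finset.Icc (1:ℤ) (K:ℤ),
        1/(2*Real.log N*(l:ℝ)) ≤ ((((|k - l| - |l| : ℤ) : ℝ) : ℂ) * uCoeff N l * starRingEnd ℂ (uCoeff N (l - k))).re := by
      intro l hl
      rw [Finset.mem_Icc] at hl
      have hlN : l ≤ (N:ℤ) := by omega
      have hlk : l - k = l + m := by omega
      have h1m : 1 ≤ l + m := by omega
      have hmN : l + m ≤ (N:ℤ) := by omega
      rw [uCoeff_val hl.1 hlN, hlk, uCoeff_val h1m hmN, Complex.conj_ofReal, habs l hl.1]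
      rw [← Complex.ofReal_mul, ← Complex.ofReal_mul, Complex.ofReal_re]
      have hlr : (1:ℝ) ≤ (l:ℝ) := by exact_mod_cast hl.1
      have hmr : (0:ℝ) < (m:ℝ) := by exact_mod_cast (by omega : (0:ℤ) < m)
      have hlm : (0:ℝ) < ((l:ℝ) + (m:ℝ)) := by linarith
      have hcast : ((l + m : ℤ):ℝ) = (l:ℝ) + (m:ℝ) := by push_cast; ring
      rw [hcast]
      have hss : Real.sqrt (Real.log N) * Real.sqrt (Real.log N) = Real.log N :=
        Real.mul_self_sqrt hL0.le
      have hexp : (m:ℝ) * (1 / (Real.sqrt (Real.log N) * (l:ℝ))) * (1 / (Real.sqrt (Real.log N) * ((l:ℝ) + (m:ℝ))))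
          = (m:ℝ) / (Real.log N * (l:ℝ) * ((l:ℝ)+(m:ℝ))) := by
        rw [mul_assoc, div_mul_div_comm, one_mul, mul_one_div]
        congr 1
        rw [show Real.sqrt (Real.log N) * (l:ℝ) * (Real.sqrt (Real.log N) * ((l:ℝ)+(m:ℝ)))
            = (Real.sqrt (Real.log N) * Real.sqrt (Real.log N)) * ((l:ℝ) * ((l:ℝ)+(m:ℝ))) from by ring, hss]
        ring
      rw [hexp, div_le_div_iff₀ (by positivity) (by positivity)]
      -- 1 * (L l (l+m)) ≤ m * (2 L l)  ⟺  l + m ≤ 2m  ⟸  l ≤ m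
      have hlm2 : (l:ℝ) ≤ (m:ℝ) := by exact_mod_cast (by omega : l ≤ m)
      nlinarith [mul_pos hL0 (mul_pos (lt_of_lt_of_le zero_lt_one hlr) hmr)]
    -- sum lower bound
    have hsub : Finset.Icc (1:ℤ) (K:ℤ) ⊆ Finset.Icc (1:ℤ) (N:ℤ) := by
      apply Finset.Icc_subset_Icc (le_refl _)
      exact_mod_cast (by omega : K ≤ N)
    have hre : (1/4 : ℝ) ≤ (c k).re := by
      rw [hrec, Complex.re_sum]
      have step1 : ∑ l ∈ Finset.Icc (1:ℤ) (K:ℤ), 1/(2*Real.log N*(l:ℝ))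
          ≤ ∑ l ∈ Finset.Icc (1:ℤ) (N:ℤ), ((((|k - l| - |l| : ℤ) : ℝ) : ℂ) * uCoeff N l * starRingEnd ℂ (uCoeff N (l - k))).re := by
        calc ∑ l ∈ Finset.Icc (1:ℤ) (K:ℤ), 1/(2*Real.log N*(l:ℝ))
            ≤ ∑ l ∈ Finset.Icc (1:ℤ) (K:ℤ), ((((|k - l| - |l| : ℤ) : ℝ) : ℂ) * uCoeff N l * starRingEnd ℂ (uCoeff N (l - k))).re :=
              Finset.sum_le_sum hg1
          _ ≤ _ := Finset.sum_le_sum_of_subset_of_nonneg hsub (fun i hi _ => hg0 i hi)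
      have hsum_eq : ∑ l ∈ Finset.Icc (1:ℤ) (K:ℤ), 1/(2*Real.log N*(l:ℝ))
          = (1/(2*Real.log N)) * ∑ l ∈ Finset.Icc (1:ℤ) (K:ℤ), 1/((l:ℝ)) := by
        rw [Finset.mul_sum]
        apply Finset.sum_congr rfl
        intro l _
        rw [div_mul_div_comm, one_mul, mul_comm]
      have hharm : Real.log ((K:ℝ)+1) ≤ ∑ l ∈ Finset.Icc (1:ℤ) (K:ℤ), 1/((l:ℝ)) := by
        rw [sum_Icc_int K (fun l => 1/((l:ℝ)))]
        have := harm_lb K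
        convert this using 2 with j
        push_cast
        ring
      have hlogK : 0 < Real.log ((K:ℝ)+1) := by
        apply Real.log_pos
        have : (1:ℝ) ≤ (K:ℝ) := by exact_mod_cast hK
        linarith
      have hLle : Real.log N ≤ 2 * Real.log ((K:ℝ)+1) := by
        have h1 : (N:ℝ) ≤ ((K:ℝ)+1)^2 := by
          have : (N:ℝ) = 4*(K:ℝ) := by rw [hNdef]; push_cast; ring
          rw [this]
          nlinarith [sq_nonneg ((K:ℝ)-1)]
        calc Real.log N ≤ Real.log (((K:ℝ)+1)^2) :=
              Real.log_le_log (by positivity) h1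
          _ = 2 * Real.log ((K:ℝ)+1) := by
              rw [show ((K:ℝ)+1)^2 = ((K:ℝ)+1)^(2:ℕ) by norm_num, Real.log_pow]
              norm_num
      have step2 : (1/4:ℝ) ≤ Real.log ((K:ℝ)+1) / (2*Real.log N) := by
        rw [le_div_iff₀ (by positivity)]
        linarith
      have step3 : Real.log ((K:ℝ)+1) / (2*Real.log N) ≤ ∑ l ∈ Finset.Icc (1:ℤ) (K:ℤ), 1/(2*Real.log N*(l:ℝ)) := by
        rw [hsum_eq, div_eq_mul_one_div, mul_comm]
        exact mul_le_mul_of_nonneg_left hharm (by positivity)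
      linarith
    calc (1/4:ℝ) ≤ (c k).re := hre
      _ ≤ |(c k).re| := le_abs_self _
      _ ≤ ‖c k‖ := Complex.abs_re_le_norm _
      _ = ‖c k‖ := rfl
  -- assemble the tsum lower bound
  have hsummable : Summable (fun k : ℤ => ‖c k‖^2) := by
    apply summable_of_ne_finset_zero (s := Finset.Icc (1-(N:ℤ)) ((N:ℤ)-1))
    intro k hk
    rw [hcdef]
    simp only [ccoeff_zero N k hk, norm_zero]
    norm_num
  have hS : (Finset.Icc (-(3*K:ℤ)) (-(2*K:ℤ)-1)).card = K := by
    rw [Int.card_Icc]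
    omega
  have hlow : (K:ℝ)/16 ≤ ∑' k : ℤ, ‖c k‖^2 := by
    have h1 : ∑ k ∈ Finset.Icc (-(3*K:ℤ)) (-(2*K:ℤ)-1), ‖c k‖^2 ≤ ∑' k : ℤ, ‖c k‖^2 :=
      Summable.sum_le_tsum _ (fun k _ => by positivity) hsummable
    have h2 : (K:ℝ)/16 ≤ ∑ k ∈ Finset.Icc (-(3*K:ℤ)) (-(2*K:ℤ)-1), ‖c k‖^2 := by
      have h3 : ∀ k ∈ Finset.Icc (-(3*K:ℤ)) (-(2*K:ℤ)-1), (1/16:ℝ) ≤ ‖c k‖^2 := by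
        intro k hk
        have := key k hk
        nlinarith [norm_nonneg (c k)]
      have := Finset.card_nsmul_le_sum _ _ _ h3
      rw [hS, nsmul_eq_mul] at this
      calc (K:ℝ)/16 = (K:ℝ) * (1/16) := by ring
        _ ≤ _ := this
    linarith
  have : Real.sqrt ((K:ℝ)/16) ≤ commNorm N := by
    rw [commNorm]
    exact Real.sqrt_le_sqrt hlow
  calc Real.sqrt (K:ℝ)/4 = Real.sqrt ((K:ℝ)/16) := by
        rw [Real.sqrt_div (by positivity) 16,
          show (16:ℝ) = 4^2 by norm_num, Real.sqrt_sq (by norm_num)]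
      _ ≤ commNorm N := this

/-- Failure of the commutator estimate
`‖u|D|ū - ū|D|u‖_{L²} ≤ C ‖u‖_{H^{1/2}} ‖u‖_{H^1}`: on the family `u_N`, the
ratio of the two sides is unbounded as `N → ∞`. -/
theorem commutator_estimate_fails :
    ∀ C : ℝ, ∃ N : ℕ, 2 ≤ N ∧
      C * (sobNormSeq (1 / 2) N * sobNormSeq 1 N) < commNorm N := by
  intro C
  set C₁ : ℝ := max C 1 with hC₁
  have hC₁1 : (1:ℝ) ≤ C₁ := le_max_right _ _
  have hCC : C ≤ C₁ := le_max_left _ _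
  have hC₁0 : (0:ℝ) < C₁ := lt_of_lt_of_le one_pos hC₁1
  set K : ℕ := ⌈Real.exp (512 * C₁^2)⌉₊ with hKdef
  have hK1 : 1 ≤ K := Nat.ceil_pos.mpr (Real.exp_pos _)
  refine ⟨4*K, by omega, ?_⟩
  set N : ℕ := 4*K with hNdef
  have hN4 : 4 ≤ N := by omega
  have hL1 : (1:ℝ) ≤ Real.log N := log_ge_one hN4
  have hL0 : (0:ℝ) < Real.log N := lt_of_lt_of_le one_pos hL1
  have hlog : 512 * C₁^2 < Real.log N := by
    rw [Real.lt_log_iff_exp_lt (by positivity)]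
    have h1 : Real.exp (512*C₁^2) ≤ (K:ℝ) := Nat.le_ceil _
    have h2 : (K:ℝ) < (N:ℝ) := by exact_mod_cast (by omega : K < N)
    linarith
  have ha := sob_half_le hN4
  have hb := sob_one_le hN4
  have ha0 : 0 ≤ sobNormSeq (1/2) N := Real.sqrt_nonneg _
  have hb0 : 0 ≤ sobNormSeq 1 N := Real.sqrt_nonneg _
  have hcomm := comm_ge K hK1
  set s : ℝ := Real.sqrt (2*N/Real.log N) with hsdef
  set t : ℝ := Real.sqrt (K:ℝ) with htdef
  have hs2 : s^2 = 2*N/Real.log N := Real.sq_sqrt (by positivity)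
  have ht2 : t^2 = (K:ℝ) := Real.sq_sqrt (by positivity)
  have hs0 : 0 ≤ s := Real.sqrt_nonneg _
  have ht0 : 0 ≤ t := Real.sqrt_nonneg _
  have hN8 : (N:ℝ) = 4*(K:ℝ) := by rw [hNdef]; push_cast; ring
  have hK0 : (0:ℝ) < (K:ℝ) := by exact_mod_cast hK1
  have key : C₁ * (2 * s) < t/4 := by
    have hsq : (C₁ * (2*s))^2 < (t/4)^2 := by
      rw [mul_pow, mul_pow, hs2, div_pow, ht2]
      rw [show C₁^2*(2^2*(2*(N:ℝ)/Real.log N)) = (32*C₁^2*(K:ℝ))/Real.log N by rw [hN8]; ring]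
      rw [div_lt_div_iff₀ hL0 (by norm_num : (0:ℝ) < 4^2)]
      nlinarith [mul_pos hK0 (sub_pos.mpr hlog)]
    exact lt_of_pow_lt_pow_left₀ 2 (by positivity) hsq
  calc C * (sobNormSeq (1/2) N * sobNormSeq 1 N)
      ≤ C₁ * (sobNormSeq (1/2) N * sobNormSeq 1 N) :=
        mul_le_mul_of_nonneg_right hCC (by positivity)
    _ ≤ C₁ * (2 * s) := by
        apply mul_le_mul_of_nonneg_left _ hC₁0.le
        exact mul_le_mul ha hb hb0 (by norm_num)
    _ < t/4 := key
    _ ≤ commNorm N := hcomm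

end
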